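/- Let u be a global finite-energy solution of the defocusing equation ∂_t²u - Δu = -|u|^{p-1}u on ℝ^d, d ≥ 3, satisfying the Morawetz bound ∫_ℝ ∫_{ℝ^d} |u(x,t)|^{p+1}/|x| dx dt ≤ C E, and suppose sup_{t≥0} ∫_{|x|>t+R} |u(x,t)|^{p+1} dx → 0 as R → ∞. Then liminf_{t→+∞} ∫_{ℝ^d} |u(x,t)|^{p+1} dx = 0. -/

import Mathlib

open MeasureTheory Real Filter

/-- If a global finite-energy defocusing solution satisfies the Morawetz bound and its
potential energy exterior to shifted light cones is uniformly small, then the potential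
energy has vanishing lower limit as `t → +∞`. -/
theorem liminf_potential_energy_zero (d : ℕ) (hd : 3 ≤ d) (p C E : ℝ)
    (hp : 1 < p) (hC : 0 < C) (hE : 0 ≤ E)
    (u : EuclideanSpace ℝ (Fin d) → ℝ → ℝ)
    (hu : ContDiff ℝ ⊤ (Function.uncurry u))
    (hwave : ∀ (x : EuclideanSpace ℝ (Fin d)) (t : ℝ),
      deriv (fun s => deriv (fun s' => u x s') s) t
        - ∑ i : Fin d, fderiv ℝ (fun y => fderiv ℝ (fun z => u z t) y
            (EuclideanSpace.single i 1)) x (EuclideanSpace.single i 1)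
      = -(|u x t| ^ (p - 1) * u x t))
    (hmorawetz : (∫⁻ t : ℝ, ∫⁻ x : EuclideanSpace ℝ (Fin d),
        ENNReal.ofReal (|u x t| ^ (p + 1) / ‖x‖)) ≤ ENNReal.ofReal (C * E))
    (hexterior : Tendsto (fun R : ℝ =>
        ⨆ (t : ℝ) (_ : 0 ≤ t),
          ∫⁻ x in {x : EuclideanSpace ℝ (Fin d) | t + R < ‖x‖},
            ENNReal.ofReal (|u x t| ^ (p + 1)))
      atTop (nhds 0)) :
    liminf (fun t : ℝ =>
        ∫⁻ x : EuclideanSpace ℝ (Fin d), ENNReal.ofReal (|u x t| ^ (p + 1)))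
      atTop = 0 := by
  by_contra hne
  set F : ℝ → ENNReal := fun t =>
    ∫⁻ x : EuclideanSpace ℝ (Fin d), ENNReal.ofReal (|u x t| ^ (p + 1)) with hFdef
  have hLpos : 0 < liminf F atTop := pos_iff_ne_zero.mpr hne
  -- choose a real ε with ofReal ε < liminf
  obtain ⟨c, hc0, hcL⟩ := exists_between hLpos
  set ε : ℝ := c.toReal with hεdef
  have hcne : c ≠ ⊤ := hcL.ne_top
  have hε0 : 0 < ε := ENNReal.toReal_pos hc0.ne' hcne
  have hεL : ENNReal.ofReal ε < liminf F atTop := by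
    rwa [hεdef, ENNReal.ofReal_toReal hcne]
  have hev : ∀ᶠ t in atTop, ENNReal.ofReal ε < F t :=
    eventually_lt_of_lt_liminf hεL
  -- choose R with exterior smallness
  have hhalf : (0 : ENNReal) < ENNReal.ofReal (ε / 2) :=
    ENNReal.ofReal_pos.mpr (by linarith)
  obtain ⟨R, hRsup, hR1⟩ :=
    (((hexterior.eventually (gt_mem_nhds hhalf))).and (eventually_ge_atTop (1 : ℝ))).exists
  -- choose T
  obtain ⟨T₀, hT₀⟩ := eventually_atTop.mp hev
  set T : ℝ := max T₀ (max R 1) with hTdef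
  have hTR : R ≤ T := le_trans (le_max_left _ _) (le_max_right _ _)
  have hT1 : (1 : ℝ) ≤ T := le_trans (le_max_right _ _) (le_max_right _ _)
  have hT0 : (0 : ℝ) < T := lt_of_lt_of_le one_pos hT1
  have hTF : ∀ t : ℝ, T ≤ t → ENNReal.ofReal ε < F t := fun t ht =>
    hT₀ t (le_trans (le_max_left _ _) ht)
  set g : ℝ → ENNReal := fun t =>
    ∫⁻ x : EuclideanSpace ℝ (Fin d), ENNReal.ofReal (|u x t| ^ (p + 1) / ‖x‖) with hgdef
  -- volume of singleton is zero
  haveI : Nonempty (Fin d) := ⟨⟨0, by omega⟩⟩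
  haveI : Nontrivial (EuclideanSpace ℝ (Fin d)) := by
    infer_instance
  have hzero : (volume : Measure (EuclideanSpace ℝ (Fin d))) {0} = 0 :=
    measure_singleton 0
  -- key lower bound for t ≥ T
  have hint : ∀ t : ℝ, T ≤ t →
      ENNReal.ofReal (ε / 2) < ENNReal.ofReal (t + R) * g t := by
    intro t ht
    have ht0 : (0 : ℝ) ≤ t := le_trans (by linarith) ht
    set s : Set (EuclideanSpace ℝ (Fin d)) := {x | t + R < ‖x‖} with hsdef
    have hs : MeasurableSet s :=
      measurableSet_lt measurable_const continuous_norm.measurable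
    have hext : (∫⁻ x in s, ENNReal.ofReal (|u x t| ^ (p + 1))) <
        ENNReal.ofReal (ε / 2) := by
      refine lt_of_le_of_lt ?_ hRsup
      exact le_iSup₂ (f := fun (t : ℝ) (_ : 0 ≤ t) =>
        ∫⁻ x in {x : EuclideanSpace ℝ (Fin d) | t + R < ‖x‖},
          ENNReal.ofReal (|u x t| ^ (p + 1))) t ht0
    have hsplit : F t = (∫⁻ x in s, ENNReal.ofReal (|u x t| ^ (p + 1)))
        + (∫⁻ x in sᶜ, ENNReal.ofReal (|u x t| ^ (p + 1))) :=
      (lintegral_add_compl _ hs).symm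
    have h1 : ENNReal.ofReal ε <
        ENNReal.ofReal (ε / 2) + ∫⁻ x in sᶜ, ENNReal.ofReal (|u x t| ^ (p + 1)) := by
      refine lt_of_lt_of_le (hTF t ht) ?_
      rw [hsplit]
      exact add_le_add_left hext.le _
    have h2 : ENNReal.ofReal (ε / 2) <
        ∫⁻ x in sᶜ, ENNReal.ofReal (|u x t| ^ (p + 1)) := by
      have heq : ENNReal.ofReal ε = ENNReal.ofReal (ε / 2) + ENNReal.ofReal (ε / 2) := by
        rw [← ENNReal.ofReal_add (by linarith) (by linarith)]
        norm_num
      rw [heq] at h1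
      exact (ENNReal.add_lt_add_iff_left ENNReal.ofReal_ne_top).mp h1
    refine lt_of_lt_of_le h2 ?_
    have hstep : (∫⁻ x in sᶜ, ENNReal.ofReal (|u x t| ^ (p + 1))) ≤
        ∫⁻ x in sᶜ, ENNReal.ofReal (t + R) *
          ENNReal.ofReal (|u x t| ^ (p + 1) / ‖x‖) := by
      refine lintegral_mono_ae ?_
      have h0 : ∀ᵐ x ∂(volume.restrict sᶜ), x ≠ (0 : EuclideanSpace ℝ (Fin d)) := by
        refine ae_restrict_of_ae ?_
        rw [ae_iff]
        convert hzero using 2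
        ext x
        simp
      have hmem : ∀ᵐ x ∂(volume.restrict sᶜ), x ∈ sᶜ := ae_restrict_mem hs.compl
      filter_upwards [h0, hmem] with x hx0 hxs
      have hxn : 0 < ‖x‖ := norm_pos_iff.mpr hx0
      have hxle : ‖x‖ ≤ t + R := not_lt.mp hxs
      have htR0 : (0 : ℝ) ≤ t + R := by linarith [norm_nonneg x]
      rw [← ENNReal.ofReal_mul htR0]
      apply ENNReal.ofReal_le_ofReal
      have ha : 0 ≤ |u x t| ^ (p + 1) := Real.rpow_nonneg (abs_nonneg _) _
      rw [mul_div_assoc', le_div_iff₀ hxn]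
      nlinarith
    refine le_trans hstep ?_
    rw [lintegral_const_mul' _ _ ENNReal.ofReal_ne_top]
    exact mul_le_mul_right (setLIntegral_le_lintegral _ _) _
  -- dyadic intervals
  set s : ℕ → Set ℝ := fun k => Set.Ico (T * 2 ^ k) (T * 2 ^ (k + 1)) with hsdef
  have hdisj : Pairwise (Function.onFun Disjoint s) := by
    have key : ∀ i j : ℕ, i < j → Disjoint (s i) (s j) := by
      intro i j hij
      rw [Set.disjoint_left]
      intro x hxi hxj
      have hle : T * 2 ^ (i + 1) ≤ T * 2 ^ j := by
        have : (2 : ℝ) ^ (i + 1) ≤ 2 ^ j :=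
          pow_le_pow_right₀ one_le_two hij
        nlinarith
      exact absurd (lt_of_lt_of_le hxi.2 (hle.trans hxj.1)) (lt_irrefl _)
    intro i j hij
    rcases hij.lt_or_gt with h | h
    · exact key i j h
    · exact (key j i h).symm
  -- lower bound on each dyadic interval
  have hIk : ∀ k : ℕ, ENNReal.ofReal (ε / 8) ≤ ∫⁻ t in s k, g t := by
    intro k
    have h2k : (1 : ℝ) ≤ 2 ^ k := one_le_pow₀ one_le_two
    have hX0 : (0 : ℝ) < T * 2 ^ (k + 2) := by positivity
    have hconst : ∀ t ∈ s k,
        ENNReal.ofReal (ε / 2) / ENNReal.ofReal (T * 2 ^ (k + 2)) ≤ g t := by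
      intro t ht
      obtain ⟨ht1, ht2⟩ := ht
      have hTt : T ≤ t := le_trans (le_mul_of_one_le_right hT0.le h2k) ht1
      have hmul := (hint t hTt).le
      have hdiv : ENNReal.ofReal (ε / 2) / ENNReal.ofReal (t + R) ≤ g t :=
        ENNReal.div_le_of_le_mul (by rwa [mul_comm] at hmul)
      refine le_trans (ENNReal.div_le_div_left (ENNReal.ofReal_le_ofReal ?_) _) hdiv
      have e1 : (2 : ℝ) ^ (k + 1) = 2 * 2 ^ k := by ring
      have e2 : (2 : ℝ) ^ (k + 2) = 4 * 2 ^ k := by ring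
      nlinarith
    calc ENNReal.ofReal (ε / 8)
        = (ENNReal.ofReal (ε / 2) / ENNReal.ofReal (T * 2 ^ (k + 2)))
            * ENNReal.ofReal (T * 2 ^ k) := by
          rw [← ENNReal.ofReal_div_of_pos hX0,
            ← ENNReal.ofReal_mul (by positivity)]
          congr 1
          have e2 : (2 : ℝ) ^ (k + 2) = 4 * 2 ^ k := by ring
          rw [e2]
          field_simp
          ring
      _ = ∫⁻ _ in s k, (ENNReal.ofReal (ε / 2) / ENNReal.ofReal (T * 2 ^ (k + 2))) := by
          rw [setLIntegral_const, hsdef]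
          simp only [Real.volume_Ico]
          congr 1
          congr 1
          ring
      _ ≤ ∫⁻ t in s k, g t := by
          refine lintegral_mono_ae ?_
          filter_upwards [ae_restrict_mem (by exact measurableSet_Ico)] with t ht
            using hconst t ht
  -- sum the lower bounds: contradiction with Morawetz
  have htot : (∑' k : ℕ, ∫⁻ t in s k, g t) ≤ ENNReal.ofReal (C * E) := by
    rw [← lintegral_iUnion (fun k => measurableSet_Ico) hdisj]
    exact le_trans (setLIntegral_le_lintegral _ _) hmorawetz
  have htop : (⊤ : ENNReal) ≤ ENNReal.ofReal (C * E) := by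
    calc (⊤ : ENNReal) = ∑' _ : ℕ, ENNReal.ofReal (ε / 8) :=
          (ENNReal.tsum_const_eq_top_of_ne_zero
            (by simpa using (ENNReal.ofReal_pos.mpr (by linarith)).ne')).symm
      _ ≤ ∑' k : ℕ, ∫⁻ t in s k, g t := ENNReal.tsum_le_tsum hIk
      _ ≤ ENNReal.ofReal (C * E) := htot
  exact ENNReal.ofReal_ne_top (top_le_iff.mp htop)
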